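/- For every natural number n, the quantities τ_m(n) satisfy τ_0(n) = 1, τ_1(n) = 0, and for every integer m ≥ 2 the recurrence τ_m(n) = (m − 1)·(τ_{m−1}(n) − n·τ_{m−2}(n)). -/

import Mathlib

/-- `τ_m(n)` is the `m`-th derivative at `0` of `x ↦ (eˣ(1−x))ⁿ`, i.e. the
coefficients in `(eˣ(1−x))ⁿ = Σ_m (τ_m(n)/m!)·xᵐ`. -/
noncomputable def tau (m n : ℕ) : ℝ :=
  iteratedDeriv m (fun x : ℝ => (Real.exp x * (1 - x)) ^ n) 0

section aux

variable (n : ℕ)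

private noncomputable def ff (n : ℕ) : ℝ → ℝ := fun x : ℝ => (Real.exp x * (1 - x)) ^ n

private lemma hff : ContDiff ℝ ⊤ (ff n) :=
  (Real.contDiff_exp.mul (contDiff_const.sub contDiff_id)).pow n

private lemma hD (k : ℕ) : Differentiable ℝ (iteratedDeriv k (ff n)) :=
  (hff n).differentiable_iteratedDeriv k (by exact_mod_cast WithTop.coe_lt_top (k : ℕ∞))

private lemma hDk (k : ℕ) (x : ℝ) :
    HasDerivAt (iteratedDeriv k (ff n)) (iteratedDeriv (k + 1) (ff n) x) x := by
  rw [iteratedDeriv_succ]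
  exact (hD n k x).hasDerivAt

private lemma base (x : ℝ) :
    (1 - x) * iteratedDeriv 1 (ff n) x = -(n : ℝ) * x * ff n x := by
  have hg : HasDerivAt (fun x : ℝ => Real.exp x * (1 - x))
      (Real.exp x * (1 - x) + Real.exp x * (0 - 1)) x :=
    (Real.hasDerivAt_exp x).mul ((hasDerivAt_const x (1 : ℝ)).sub (hasDerivAt_id x))
  have hf : HasDerivAt (ff n)
      ((n : ℝ) * (Real.exp x * (1 - x)) ^ (n - 1)
        * (Real.exp x * (1 - x) + Real.exp x * (0 - 1))) x := hg.pow n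
  rw [iteratedDeriv_one, hf.deriv]
  rcases Nat.eq_zero_or_pos n with h | h
  · subst h; simp [ff]
  · obtain ⟨m, rfl⟩ : ∃ m, n = m + 1 := ⟨n - 1, (Nat.succ_pred_eq_of_pos h).symm⟩
    simp only [ff, Nat.add_sub_cancel]
    push_cast
    rw [pow_succ]
    ring

private lemma key : ∀ k : ℕ, ∀ x : ℝ,
    (1 - x) * iteratedDeriv (k + 1) (ff n) x
      = ((k : ℝ) - (n : ℝ) * x) * iteratedDeriv k (ff n) x
        - (n : ℝ) * (k : ℝ) * iteratedDeriv (k - 1) (ff n) x := by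
  intro k
  induction k with
  | zero =>
      intro x
      simpa using base n x
  | succ k ih =>
      intro x
      have hu : HasDerivAt (fun x : ℝ => (1 - x) * iteratedDeriv (k + 1) (ff n) x)
          ((0 - 1) * iteratedDeriv (k + 1) (ff n) x
            + (1 - x) * iteratedDeriv (k + 1 + 1) (ff n) x) x :=
        ((hasDerivAt_const x (1 : ℝ)).sub (hasDerivAt_id x)).mul (hDk n (k + 1) x)
      have h1 : HasDerivAt (fun x : ℝ => (k : ℝ) - (n : ℝ) * x) (0 - (n : ℝ) * 1) x :=
        (hasDerivAt_const x (k : ℝ)).sub ((hasDerivAt_id x).const_mul (n : ℝ))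
      have hv : HasDerivAt (fun x : ℝ => ((k : ℝ) - (n : ℝ) * x) * iteratedDeriv k (ff n) x
            - (n : ℝ) * (k : ℝ) * iteratedDeriv (k - 1) (ff n) x)
          ((0 - (n : ℝ) * 1) * iteratedDeriv k (ff n) x
            + ((k : ℝ) - (n : ℝ) * x) * iteratedDeriv (k + 1) (ff n) x
            - (n : ℝ) * (k : ℝ) * iteratedDeriv (k - 1 + 1) (ff n) x) x :=
        (h1.mul (hDk n k x)).sub ((hDk n (k - 1) x).const_mul ((n : ℝ) * (k : ℝ)))
      have hd : deriv (fun x : ℝ => (1 - x) * iteratedDeriv (k + 1) (ff n) x) x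
          = deriv (fun x : ℝ => ((k : ℝ) - (n : ℝ) * x) * iteratedDeriv k (ff n) x
            - (n : ℝ) * (k : ℝ) * iteratedDeriv (k - 1) (ff n) x) x := by
        congr 1
        exact funext ih
      rw [hu.deriv, hv.deriv] at hd
      have hfix : (n : ℝ) * (k : ℝ) * iteratedDeriv (k - 1 + 1) (ff n) x
          = (n : ℝ) * (k : ℝ) * iteratedDeriv k (ff n) x := by
        cases k <;> simp
      rw [hfix] at hd
      simp only [Nat.add_sub_cancel]
      push_cast
      nlinarith [hd]

end aux

/-- `τ_0(n) = 1`, `τ_1(n) = 0`, and for `m ≥ 2`,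
`τ_m(n) = (m − 1)(τ_{m−1}(n) − n·τ_{m−2}(n))`. -/
theorem tau_recurrence (n : ℕ) :
    tau 0 n = 1 ∧ tau 1 n = 0 ∧
      ∀ m : ℕ, 2 ≤ m → tau m n = ((m : ℝ) - 1) * (tau (m - 1) n - (n : ℝ) * tau (m - 2) n) := by
  refine ⟨?_, ?_, ?_⟩
  · simp [tau, iteratedDeriv_zero]
  · have := base n 0
    change iteratedDeriv 1 (ff n) 0 = 0
    simpa [tau, ff] using this
  · intro m hm
    obtain ⟨k, rfl⟩ : ∃ k, m = k + 2 := ⟨m - 2, by omega⟩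
    have h := key n (k + 1) 0
    simp only [Nat.add_sub_cancel, mul_zero, sub_zero] at h
    have heq : tau (k + 2) n = ((k : ℝ) + 1) * tau (k + 1) n
        - (n : ℝ) * ((k : ℝ) + 1) * tau k n := by
      have h2 := h
      push_cast at h2
      delta ff at h2
      simpa [tau, ff, show k + 1 + 1 = k + 2 from rfl] using h2
    rw [show k + 2 - 1 = k + 1 from rfl, show k + 2 - 2 = k from rfl, heq]
    push_cast
    ring
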